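/- Let n ≥ 2 and 2 ≤ m ≤ n. Let A be the multiplicative semigroup of positive integers, let p₁ < p₂ < ⋯ < p_n be the first n prime numbers, let M = p₁·p₂·⋯·p_m, and let B be the subsemigroup of A consisting of all positive multiples of M. Call a subset T ⊆ {1,…,n} transferable if for every partition {1,…,n} = S₁ ⊔ T ⊔ S₂, every commutative semigroup C, and all semigroup homomorphisms f, g : A → C with f|_B = g|_B, one has (∏_{i ∈ S₁ ∪ T} f(p_i))·(∏_{j ∈ S₂} g(p_j)) = (∏_{i ∈ S₁} f(p_i))·(∏_{j ∈ T ∪ S₂} g(p_j)). Then T is transferable if and only if T = ∅ or {1,…,m} ⊆ T. -/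

import Mathlib

universe u

/-- The mixed word `W^{f,g}_{σ, σᶜ}` for the word `W(y₁,…,y_n) = y₁⋯y_n` evaluated at
the tuple `P`: the product, over all `n` indices, of `f (P i)` for `i ∈ σ` and
`g (P j)` for `j ∉ σ`. Since a semigroup need not have a unit, possibly-empty
subproducts are collapsed using the homomorphism property: if `σ = ∅` the value is
`g (∏ i, P i)`, if `σ` is everything it is `f (∏ i, P i)`, and otherwise it is
`f (∏ i ∈ σ, P i) * g (∏ j ∈ σᶜ, P j)`. -/
def mixedWord {C : Type u} [Semigroup C] {n : ℕ} (f g : ℕ+ →ₙ* C)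
    (P : Fin n → ℕ+) (σ : Finset (Fin n)) : C :=
  if σ = ∅ then g (∏ i, P i)
  else if σᶜ = ∅ then f (∏ i, P i)
  else f (∏ i ∈ σ, P i) * g (∏ j ∈ σᶜ, P j)

/-- `Prop` (lifted to universe `u`) with `∨` as multiplication. -/
instance instCommSemigroupULiftProp : CommSemigroup (ULift.{u} Prop) where
  mul a b := ⟨a.down ∨ b.down⟩
  mul_assoc a b c := congrArg ULift.up (propext or_assoc)
  mul_comm a b := congrArg ULift.up (propext or_comm)

lemma uliftProp_mul (a b : ULift.{u} Prop) : a * b = ⟨a.down ∨ b.down⟩ := rfl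

/-- The "divisible by the prime `p`" homomorphism. -/
def fHom (p : ℕ) (hp : p.Prime) : ℕ+ →ₙ* ULift.{u} Prop where
  toFun x := ⟨p ∣ (x : ℕ)⟩
  map_mul' x y := congrArg ULift.up (propext (by
    show p ∣ ((x * y : ℕ+) : ℕ) ↔ p ∣ (x : ℕ) ∨ p ∣ (y : ℕ)
    rw [PNat.mul_coe]
    exact hp.dvd_mul))

/-- The "divisible by some prime other than `p`" homomorphism. -/
def gHom (p : ℕ) : ℕ+ →ₙ* ULift.{u} Prop where
  toFun x := ⟨∃ q, q.Prime ∧ q ≠ p ∧ q ∣ (x : ℕ)⟩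
  map_mul' x y := congrArg ULift.up (propext (by
    show (∃ q, q.Prime ∧ q ≠ p ∧ q ∣ ((x * y : ℕ+) : ℕ)) ↔
      (∃ q, q.Prime ∧ q ≠ p ∧ q ∣ (x : ℕ)) ∨ (∃ q, q.Prime ∧ q ≠ p ∧ q ∣ (y : ℕ))
    rw [PNat.mul_coe]
    constructor
    · rintro ⟨q, hq, hqp, hdvd⟩
      rcases hq.dvd_mul.1 hdvd with h | h
      exacts [Or.inl ⟨q, hq, hqp, h⟩, Or.inr ⟨q, hq, hqp, h⟩]
    · rintro (⟨q, hq, hqp, h⟩ | ⟨q, hq, hqp, h⟩)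
      exacts [⟨q, hq, hqp, h.mul_right _⟩, ⟨q, hq, hqp, h.mul_left _⟩]))

lemma fHom_apply (p : ℕ) (hp : p.Prime) (x : ℕ+) :
    fHom.{u} p hp x = ⟨p ∣ (x : ℕ)⟩ := rfl

lemma gHom_apply (p : ℕ) (x : ℕ+) :
    gHom.{u} p x = ⟨∃ q, q.Prime ∧ q ≠ p ∧ q ∣ (x : ℕ)⟩ := rfl

theorem transferable_iff_empty_or_contains (n m : ℕ) (hn : 2 ≤ n) (hm : 2 ≤ m)
    (hmn : m ≤ n)
    (P : Fin n → ℕ+) (hP : ∀ i : Fin n, (P i : ℕ) = Nat.nth Nat.Prime (i : ℕ))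
    (M : ℕ+) (hM : (M : ℕ) = ∏ i ∈ Finset.range m, Nat.nth Nat.Prime i)
    (T : Finset (Fin n)) :
    (∀ S₁ S₂ : Finset (Fin n), Disjoint S₁ T → Disjoint S₁ S₂ → Disjoint T S₂ →
      S₁ ∪ T ∪ S₂ = Finset.univ →
      ∀ (C : Type u) [CommSemigroup C], ∀ f g : ℕ+ →ₙ* C,
        (∀ b : ℕ+, M ∣ b → f b = g b) →
        mixedWord f g P (S₁ ∪ T) = mixedWord f g P S₁)
    ↔ (T = ∅ ∨ ∀ i : Fin n, (i : ℕ) < m → i ∈ T) := by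
  have hcoe : ∀ s : Finset (Fin n), ((∏ i ∈ s, P i : ℕ+) : ℕ) = ∏ i ∈ s, (P i : ℕ) := by
    intro s; push_cast; ring
  have hPprime : ∀ i : Fin n, ((P i : ℕ)).Prime := by
    intro i; rw [hP]; exact Nat.prime_nth_prime _
  have hnth_inj : ∀ i j : ℕ, Nat.nth Nat.Prime i = Nat.nth Nat.Prime j → i = j :=
    fun i j h => Nat.nth_injective Nat.infinite_setOf_prime h
  constructor
  · -- transferable → (T = ∅ ∨ contains first m)
    intro h
    by_contra hc
    push_neg at hc
    obtain ⟨hTne, i₀, hi₀m, hi₀T⟩ := hc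
    set p : ℕ := Nat.nth Nat.Prime (i₀ : ℕ) with hp_def
    have hp : p.Prime := Nat.prime_nth_prime _
    set S₂ : Finset (Fin n) := {i₀} with hS₂def
    set S₁ : Finset (Fin n) := (T ∪ {i₀})ᶜ with hS₁def
    have d1 : Disjoint S₁ T := by
      rw [Finset.disjoint_left]
      intro x hx hxT
      rw [hS₁def, Finset.mem_compl, Finset.mem_union] at hx
      exact hx (Or.inl hxT)
    have d2 : Disjoint S₁ S₂ := by
      rw [Finset.disjoint_left]
      intro x hx hxS
      rw [hS₁def, Finset.mem_compl, Finset.mem_union] at hx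
      exact hx (Or.inr hxS)
    have d3 : Disjoint T S₂ := by
      rw [hS₂def, Finset.disjoint_singleton_right]
      exact hi₀T
    have hu : S₁ ∪ T ∪ S₂ = Finset.univ := by
      rw [Finset.union_assoc, hS₁def, hS₂def]
      ext x
      simp only [Finset.mem_union, Finset.mem_compl, Finset.mem_univ, iff_true]
      exact Or.symm (em _)
    have hfg : ∀ b : ℕ+, M ∣ b → fHom.{u} p hp b = gHom.{u} p b := by
      intro b hb
      have hMb : (M : ℕ) ∣ (b : ℕ) := PNat.dvd_iff.mp hb
      apply congrArg ULift.up
      apply propext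
      apply iff_of_true
      · -- p ∣ b
        refine dvd_trans ?_ hMb
        rw [hM]
        exact Finset.dvd_prod_of_mem _ (Finset.mem_range.2 hi₀m)
      · -- some other prime divides b
        obtain ⟨j, hjm, hji⟩ : ∃ j, j < m ∧ j ≠ (i₀ : ℕ) := by
          by_cases h0 : (i₀ : ℕ) = 0
          · exact ⟨1, by omega, by omega⟩
          · exact ⟨0, by omega, fun hh => h0 hh.symm⟩
        refine ⟨Nat.nth Nat.Prime j, Nat.prime_nth_prime j, ?_, ?_⟩
        · intro hh; exact hji (hnth_inj _ _ hh)
        · refine dvd_trans ?_ hMb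
          rw [hM]
          exact Finset.dvd_prod_of_mem _ (Finset.mem_range.2 hjm)
    have key := h S₁ S₂ d1 d2 d3 hu (ULift.{u} Prop) (fHom.{u} p hp) (gHom.{u} p) hfg
    -- σ = S₁ ∪ T = {i₀}ᶜ
    have hσ : S₁ ∪ T = ({i₀} : Finset (Fin n))ᶜ := by
      ext x
      simp only [hS₁def, Finset.mem_union, Finset.mem_compl, Finset.mem_singleton]
      constructor
      · rintro (hx | hx)
        · exact fun he => hx (Or.inr he)
        · exact fun he => hi₀T (he ▸ hx)
      · intro hne
        by_cases hxT : x ∈ T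
        · exact Or.inr hxT
        · exact Or.inl (fun hh => hh.elim hxT hne)
    obtain ⟨i₁, hi₁⟩ : ∃ i₁ : Fin n, i₁ ≠ i₀ := by
      by_cases h0 : i₀ = ⟨0, by omega⟩
      · refine ⟨⟨1, by omega⟩, fun hh => ?_⟩
        rw [h0] at hh
        exact absurd (congrArg Fin.val hh) (by simp)
      · exact ⟨⟨0, by omega⟩, fun hh => h0 hh.symm⟩
    have hσne : S₁ ∪ T ≠ ∅ := by
      rw [hσ]
      exact Finset.ne_empty_of_mem (Finset.mem_compl.2 (by simpa using hi₁))
    have hσcne : (S₁ ∪ T)ᶜ ≠ ∅ := by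
      rw [hσ, compl_compl]
      exact Finset.singleton_ne_empty i₀
    obtain ⟨j₀, hj₀⟩ : T.Nonempty := hTne
    have hj₀i₀ : j₀ ≠ i₀ := fun hh => hi₀T (hh ▸ hj₀)
    -- a prime other than p dividing any product over a set containing j₀
    have hother : ∀ s : Finset (Fin n), j₀ ∈ s →
        ∃ q, q.Prime ∧ q ≠ p ∧ q ∣ ((∏ i ∈ s, P i : ℕ+) : ℕ) := by
      intro s hs
      refine ⟨(P j₀ : ℕ), hPprime j₀, ?_, ?_⟩
      · rw [hP, hp_def]
        intro hh
        exact hj₀i₀ (Fin.ext (hnth_inj _ _ hh))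
      · rw [hcoe]
        exact Finset.dvd_prod_of_mem _ hs
    -- LHS of key is False
    have hL : ¬ (mixedWord (fHom.{u} p hp) (gHom.{u} p) P (S₁ ∪ T)).down := by
      rw [mixedWord, if_neg hσne, if_neg hσcne, hσ, compl_compl, Finset.prod_singleton,
        uliftProp_mul, fHom_apply, gHom_apply]
      rintro (hdvd | ⟨q, hq, hqp, hqd⟩)
      · rw [hcoe] at hdvd
        obtain ⟨i, hi, hpi⟩ := (hp.prime.dvd_finset_prod_iff _).1 hdvd
        have : p = (P i : ℕ) := (Nat.prime_dvd_prime_iff_eq hp (hPprime i)).1 hpi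
        rw [hP, hp_def] at this
        have : i₀ = i := Fin.ext (hnth_inj _ _ this)
        rw [Finset.mem_compl, Finset.mem_singleton] at hi
        exact hi this.symm
      · rw [hP, ← hp_def] at hqd
        exact hqp ((Nat.prime_dvd_prime_iff_eq hq hp).1 hqd)
    -- RHS of key is True
    have hR : (mixedWord (fHom.{u} p hp) (gHom.{u} p) P S₁).down := by
      by_cases hS1 : S₁ = ∅
      · rw [mixedWord, if_pos hS1, gHom_apply]
        exact hother Finset.univ (Finset.mem_univ j₀)
      · have hS1c : S₁ᶜ = T ∪ {i₀} := by rw [hS₁def, compl_compl]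
        have hS1cne : S₁ᶜ ≠ ∅ := by
          rw [hS1c]
          exact Finset.ne_empty_of_mem (Finset.mem_union_left _ hj₀)
        rw [mixedWord, if_neg hS1, if_neg hS1cne, hS1c, uliftProp_mul, gHom_apply]
        exact Or.inr (hother (T ∪ {i₀}) (Finset.mem_union_left _ hj₀))
    exact hL (key ▸ hR)
  · -- (T = ∅ ∨ contains first m) → transferable
    rintro (hT | hT) S₁ S₂ d1 d2 d3 hu C _ f g hfg
    · rw [hT, Finset.union_empty]
    · -- T contains all indices < m
      have hTne : T ≠ ∅ :=
        Finset.ne_empty_of_mem (hT ⟨0, by omega⟩ (by simpa using by omega))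
      have hσne : S₁ ∪ T ≠ ∅ := fun hh => hTne (Finset.union_eq_empty.1 hh).2
      -- M divides the product over T
      have hMt : M ∣ ∏ i ∈ T, P i := by
        rw [PNat.dvd_iff, hcoe, hM]
        set Tm : Finset (Fin n) := Finset.univ.filter (fun j : Fin n => (j : ℕ) < m) with hTm
        have hsub : Tm ⊆ T := by
          intro x hx
          rw [hTm, Finset.mem_filter] at hx
          exact hT x hx.2
        have heq : ∏ i ∈ Finset.range m, Nat.nth Nat.Prime i = ∏ j ∈ Tm, (P j : ℕ) := by
          refine Finset.prod_bij (fun a ha => (⟨a, lt_of_lt_of_le (Finset.mem_range.1 ha) hmn⟩ : Fin n)) ?_ ?_ ?_ ?_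
          · intro a ha
            rw [hTm, Finset.mem_filter]
            exact ⟨Finset.mem_univ _, Finset.mem_range.1 ha⟩
          · intro a ha b hb hab
            exact congrArg Fin.val hab
          · intro b hb
            rw [hTm, Finset.mem_filter] at hb
            exact ⟨(b : ℕ), Finset.mem_range.2 hb.2, Fin.ext rfl⟩
          · intro a ha
            rw [hP]
        rw [heq]
        exact Finset.prod_dvd_prod_of_subset _ _ _ hsub
      have hft : f (∏ i ∈ T, P i) = g (∏ i ∈ T, P i) := hfg _ hMt
      have hcompl1 : (S₁ ∪ T)ᶜ = S₂ := by
        have hmem : ∀ x : Fin n, x ∈ S₁ ∨ x ∈ T ∨ x ∈ S₂ := by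
          intro x
          have hx : x ∈ S₁ ∪ T ∪ S₂ := by rw [hu]; exact Finset.mem_univ x
          simpa [Finset.mem_union, or_assoc] using hx
        ext x
        simp only [Finset.mem_compl, Finset.mem_union]
        constructor
        · intro hx
          rcases hmem x with h | h | h
          · exact absurd (Or.inl h) hx
          · exact absurd (Or.inr h) hx
          · exact h
        · intro hx
          rintro (h | h)
          · exact Finset.disjoint_left.1 d2 h hx
          · exact Finset.disjoint_left.1 d3 h hx
      have hcompl2 : S₁ᶜ = T ∪ S₂ := by
        have hmem : ∀ x : Fin n, x ∈ S₁ ∨ x ∈ T ∨ x ∈ S₂ := by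
          intro x
          have hx : x ∈ S₁ ∪ T ∪ S₂ := by rw [hu]; exact Finset.mem_univ x
          simpa [Finset.mem_union, or_assoc] using hx
        ext x
        simp only [Finset.mem_compl, Finset.mem_union]
        constructor
        · intro hx
          rcases hmem x with h | h | h
          · exact absurd h hx
          · exact Or.inl h
          · exact Or.inr h
        · rintro (h | h) hx
          · exact Finset.disjoint_left.1 d1 hx h
          · exact Finset.disjoint_left.1 d2 hx h
      have hprod1 : ∏ i ∈ S₁ ∪ T, P i = (∏ i ∈ S₁, P i) * ∏ i ∈ T, P i :=
        Finset.prod_union d1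
      by_cases hS2 : S₂ = ∅
      · have hσu : S₁ ∪ T = Finset.univ := by
          rw [← compl_compl (S₁ ∪ T), hcompl1, hS2, Finset.compl_empty]
        rw [mixedWord, mixedWord, if_neg hσne, hcompl1, if_pos hS2]
        by_cases hS1 : S₁ = ∅
        · rw [if_pos hS1]
          apply hfg
          have hTu : T = Finset.univ := by rw [← hσu, hS1, Finset.empty_union]
          rw [← hTu]
          exact hMt
        · rw [if_neg hS1, hcompl2, hS2, Finset.union_empty, if_neg hTne]
          rw [show (∏ i, P i) = (∏ i ∈ S₁, P i) * ∏ i ∈ T, P i from by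
            rw [← hprod1, hσu], map_mul, hft]
      · rw [mixedWord, mixedWord, if_neg hσne, hcompl1, if_neg hS2]
        have huniv : ∏ i, P i = (∏ i ∈ S₁ ∪ T, P i) * ∏ i ∈ S₂, P i := by
          rw [← Finset.prod_union (Finset.disjoint_union_left.2 ⟨d2, d3⟩), hu]
        by_cases hS1 : S₁ = ∅
        · rw [if_pos hS1]
          rw [hprod1, hS1, Finset.prod_empty, one_mul, hft, huniv, hprod1, hS1,
            Finset.prod_empty, one_mul, map_mul]
        · have hS1cne : S₁ᶜ ≠ ∅ := by
            rw [hcompl2]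
            intro hh
            exact hTne (Finset.union_eq_empty.1 hh).1
          rw [if_neg hS1, if_neg hS1cne, hcompl2]
          rw [hprod1, map_mul, hft, Finset.prod_union d3, map_mul, mul_assoc]
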